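/- Let m and N be positive integers and let (a_{i₁,...,i_m})_{i₁,...,i_m=1}^{N} be an array of real numbers. Then (1/√2)^m · ( Σ_{i₁,...,i_m=1}^{N} |a_{i₁,...,i_m}|² )^{1/2} ≤ 2^{-mN} · Σ_{ε¹,...,ε^m ∈ {-1,1}^N} | Σ_{i₁,...,i_m=1}^{N} ε¹_{i₁}···ε^m_{i_m} a_{i₁,...,i_m} |, i.e. the ℓ₂-norm of the array is bounded by (√2)^m times the average over all choices of m independent sign vectors of the absolute value of the corresponding signed sum. -/

import Mathlib

open Finset

namespace MK

noncomputable def sgn (b : Bool) : ℝ := if b then 1 else -1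

lemma sgn_not (b : Bool) : sgn (!b) = - sgn b := by cases b <;> simp [sgn]
lemma sgn_mul_self (b : Bool) : sgn b * sgn b = 1 := by cases b <;> norm_num [sgn]

variable {n : ℕ}

/-- signed sum -/
noncomputable def S (b : Fin n → ℝ) (ε : Fin n → Bool) : ℝ := ∑ i, sgn (ε i) * b i

/-- Walsh function -/
noncomputable def w (A : Finset (Fin n)) (ε : Fin n → Bool) : ℝ := ∏ i ∈ A, sgn (ε i)

/-- coordinate flip -/
def fl (i : Fin n) (ε : Fin n → Bool) : Fin n → Bool := Function.update ε i (!ε i)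

lemma fl_apply_self (i : Fin n) (ε) : fl i ε i = !ε i := by simp [fl]
lemma fl_apply_ne (i j : Fin n) (ε) (h : j ≠ i) : fl i ε j = ε j := by
  simp [fl, Function.update_of_ne h]

lemma fl_involutive (i : Fin n) : Function.Involutive (fl i) := by
  intro ε; funext j
  by_cases h : j = i
  · subst h; simp [fl]
  · simp [fl_apply_ne _ _ _ h, fl, Function.update_of_ne h]

lemma sum_comp_fl (i : Fin n) (F : (Fin n → Bool) → ℝ) :
    ∑ ε, F (fl i ε) = ∑ ε, F ε :=
  Fintype.sum_bijective (fl i) (fl_involutive i).bijective _ _ (fun _ => rfl)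

def ng (ε : Fin n → Bool) : Fin n → Bool := fun j => !ε j

lemma ng_involutive : Function.Involutive (ng (n := n)) := by
  intro ε; funext j; simp [ng]

lemma sum_comp_ng (F : (Fin n → Bool) → ℝ) :
    ∑ ε, F (ng ε) = ∑ ε, F ε :=
  Fintype.sum_bijective ng ng_involutive.bijective _ _ (fun _ => rfl)

lemma walsh_sum (η ε : Fin n → Bool) :
    ∑ A : Finset (Fin n), w A η * w A ε = if η = ε then (2:ℝ)^n else 0 := by
  have h1 : ∀ A : Finset (Fin n), w A η * w A ε = ∏ i ∈ A, (sgn (η i) * sgn (ε i)) := by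
    intro A; rw [w, w, ← Finset.prod_mul_distrib]
  simp_rw [h1]
  have h2 : ∑ A : Finset (Fin n), ∏ i ∈ A, (sgn (η i) * sgn (ε i))
      = ∏ i : Fin n, (sgn (η i) * sgn (ε i) + 1) := by
    rw [Finset.prod_add]
    rw [← Finset.powerset_univ]
    refine Finset.sum_congr rfl (fun A _ => ?_)
    simp
  rw [h2]
  have h3 : ∀ i : Fin n, sgn (η i) * sgn (ε i) + 1 = if η i = ε i then (2:ℝ) else 0 := by
    intro i; cases hh : η i <;> cases he : ε i <;> norm_num [sgn]
  simp_rw [h3]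
  by_cases h : η = ε
  · subst h; simp
  · rw [if_neg h]
    obtain ⟨i, hi⟩ : ∃ i, η i ≠ ε i := by
      by_contra hc; push_neg at hc; exact h (funext hc)
    exact Finset.prod_eq_zero (mem_univ i) (if_neg hi)

lemma inversion (f : (Fin n → Bool) → ℝ) (ε : Fin n → Bool) :
    ∑ A : Finset (Fin n), (∑ η, f η * w A η) * w A ε = 2^n * f ε := by
  have : ∑ A : Finset (Fin n), (∑ η, f η * w A η) * w A ε
      = ∑ η, f η * ∑ A : Finset (Fin n), w A η * w A ε := by
    simp_rw [Finset.sum_mul, Finset.mul_sum]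
    rw [Finset.sum_comm]
    refine Finset.sum_congr rfl (fun η _ => Finset.sum_congr rfl (fun A _ => by ring))
  rw [this]
  simp_rw [walsh_sum]
  simp [mul_comm]

lemma parseval (f : (Fin n → Bool) → ℝ) :
    ∑ A : Finset (Fin n), (∑ ε, f ε * w A ε)^2 = 2^n * ∑ ε, f ε ^ 2 := by
  have : ∑ A : Finset (Fin n), (∑ ε, f ε * w A ε)^2
      = ∑ ε, f ε * ∑ A : Finset (Fin n), (∑ η, f η * w A η) * w A ε := by
    simp_rw [Finset.mul_sum]
    rw [Finset.sum_comm]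
    refine Finset.sum_congr rfl (fun A _ => ?_)
    rw [sq, Finset.sum_mul]
    refine Finset.sum_congr rfl (fun ε _ => by ring)
  rw [this]
  simp_rw [inversion]
  rw [Finset.mul_sum]
  refine Finset.sum_congr rfl (fun ε _ => by ring)

lemma w_fl (A : Finset (Fin n)) (i : Fin n) (ε) :
    w A (fl i ε) = (if i ∈ A then -1 else 1) * w A ε := by
  by_cases h : i ∈ A
  · rw [if_pos h, w, w, ← Finset.mul_prod_erase A _ h, ← Finset.mul_prod_erase A (fun j => sgn (ε j)) h]
    rw [fl_apply_self, sgn_not]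
    rw [Finset.prod_congr rfl (fun j hj => by
      rw [fl_apply_ne _ _ _ (Finset.ne_of_mem_erase hj)])]
    ring
  · rw [if_neg h, one_mul, w, w]
    refine Finset.prod_congr rfl (fun j hj => ?_)
    rw [fl_apply_ne i j ε (by rintro rfl; exact h hj)]

lemma corr (f : (Fin n → Bool) → ℝ) (i : Fin n) :
    (2:ℝ)^n * ∑ ε, f ε * f (fl i ε)
      = ∑ A : Finset (Fin n), (if i ∈ A then (-1:ℝ) else 1) * (∑ ε, f ε * w A ε)^2 := by
  have key : ∀ A : Finset (Fin n), ∑ ε, w A ε * f (fl i ε)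
      = (if i ∈ A then (-1:ℝ) else 1) * ∑ ε, f ε * w A ε := by
    intro A
    have := sum_comp_fl i (fun ε => w A ε * f (fl i ε))
    rw [← this]
    have : ∀ ε, w A (fl i ε) * f (fl i (fl i ε))
        = (if i ∈ A then (-1:ℝ) else 1) * (f ε * w A ε) := by
      intro ε
      rw [fl_involutive i ε, w_fl]; ring
    simp_rw [this]
    rw [← Finset.mul_sum]
  calc (2:ℝ)^n * ∑ ε, f ε * f (fl i ε)
      = ∑ ε, (2^n * f ε) * f (fl i ε) := by rw [Finset.mul_sum]; exact Finset.sum_congr rfl (fun ε _ => by ring)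
    _ = ∑ ε, (∑ A : Finset (Fin n), (∑ η, f η * w A η) * w A ε) * f (fl i ε) := by
        simp_rw [inversion]
    _ = ∑ ε, ∑ A : Finset (Fin n), ((∑ η, f η * w A η) * w A ε) * f (fl i ε) := by
        simp only [Finset.sum_mul]
    _ = ∑ A : Finset (Fin n), (∑ η, f η * w A η) * ∑ ε, w A ε * f (fl i ε) := by
        rw [Finset.sum_comm]
        refine Finset.sum_congr rfl (fun A _ => ?_)
        rw [Finset.mul_sum]
        exact Finset.sum_congr rfl (fun ε _ => by ring)
    _ = ∑ A : Finset (Fin n), (if i ∈ A then (-1:ℝ) else 1) * (∑ ε, f ε * w A ε)^2 := by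
        refine Finset.sum_congr rfl (fun A _ => ?_)
        rw [key]; ring


lemma w_ng (A : Finset (Fin n)) (ε) : w A (ng ε) = (-1)^A.card * w A ε := by
  rw [w, w]
  have : ∀ j ∈ A, sgn (ng ε j) = -1 * sgn (ε j) := by
    intro j _; rw [ng, sgn_not]; ring
  rw [Finset.prod_congr rfl this, Finset.prod_mul_distrib, Finset.prod_const]

lemma odd_vanish (f : (Fin n → Bool) → ℝ) (hf : ∀ ε, f (ng ε) = f ε)
    (A : Finset (Fin n)) (hA : A.card = 1) :
    ∑ ε, f ε * w A ε = 0 := by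
  have h := sum_comp_ng (fun ε => f ε * w A ε)
  have h2 : ∀ ε, f (ng ε) * w A (ng ε) = - (f ε * w A ε) := by
    intro ε; rw [hf, w_ng, hA]; ring
  simp_rw [h2] at h
  rw [Finset.sum_neg_distrib] at h
  linarith

lemma S_fl (b : Fin n → ℝ) (i : Fin n) (ε) :
    S b (fl i ε) = S b ε - 2 * (sgn (ε i) * b i) := by
  rw [S, S, ← Finset.sum_erase_add _ _ (mem_univ i), ← Finset.sum_erase_add _ (fun j => sgn (ε j) * b j) (mem_univ i)]
  rw [Finset.sum_congr rfl (fun j hj => by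
    rw [fl_apply_ne i j ε (Finset.ne_of_mem_erase hj)])]
  rw [fl_apply_self, sgn_not]
  ring

lemma pointwise (b : Fin n → ℝ) (ε) :
    ((n:ℝ) - 2) * |S b ε| ≤ ∑ i, |S b (fl i ε)| := by
  have h1 : ∑ i, S b (fl i ε) = ((n:ℝ) - 2) * S b ε := by
    simp_rw [S_fl]
    rw [Finset.sum_sub_distrib, Finset.sum_const, ← Finset.mul_sum, ← S]
    simp [card_univ]
    ring
  calc ((n:ℝ) - 2) * |S b ε| ≤ |((n:ℝ) - 2) * S b ε| := by
        rw [abs_mul]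
        exact mul_le_mul_of_nonneg_right (le_abs_self _) (abs_nonneg _)
    _ = |∑ i, S b (fl i ε)| := by rw [h1]
    _ ≤ ∑ i, |S b (fl i ε)| := Finset.abs_sum_le_sum_abs _ _

lemma sum_sgn_pair (i j : Fin n) (hij : i ≠ j) :
    ∑ ε : Fin n → Bool, sgn (ε i) * sgn (ε j) = 0 := by
  have h := sum_comp_fl i (fun ε => sgn (ε i) * sgn (ε j))
  have h2 : ∀ ε : Fin n → Bool, sgn (fl i ε i) * sgn (fl i ε j) = -(sgn (ε i) * sgn (ε j)) := by
    intro ε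
    rw [fl_apply_self, sgn_not, fl_apply_ne i j ε (Ne.symm hij)]
    ring
  simp_rw [h2] at h
  rw [Finset.sum_neg_distrib] at h
  linarith

lemma sum_S_sq (b : Fin n → ℝ) : ∑ ε, (S b ε)^2 = 2^n * ∑ i, b i ^ 2 := by
  have expand : ∀ ε, (S b ε)^2 = ∑ i, ∑ j, (sgn (ε i) * sgn (ε j)) * (b i * b j) := by
    intro ε
    rw [S, sq, Finset.sum_mul_sum]
    exact Finset.sum_congr rfl (fun i _ => Finset.sum_congr rfl (fun j _ => by ring))
  simp_rw [expand]
  rw [Finset.sum_comm]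
  have : ∀ i : Fin n, ∑ ε : Fin n → Bool, ∑ j, (sgn (ε i) * sgn (ε j)) * (b i * b j)
      = 2^n * b i ^ 2 := by
    intro i
    rw [Finset.sum_comm]
    have hterm : ∀ j : Fin n, ∑ ε : Fin n → Bool, (sgn (ε i) * sgn (ε j)) * (b i * b j)
        = if i = j then 2^n * b i ^2 else 0 := by
      intro j
      by_cases hij : i = j
      · subst hij
        rw [if_pos rfl]
        simp_rw [sgn_mul_self]
        rw [Finset.sum_const]
        simp [card_univ]
        ring
      · rw [if_neg hij, ← Finset.sum_mul, sum_sgn_pair i j hij, zero_mul]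
    simp_rw [hterm]
    simp
  simp_rw [this]
  rw [← Finset.mul_sum]

lemma sum_ite_mem_card (A : Finset (Fin n)) :
    ∑ i : Fin n, (if i ∈ A then (-1:ℝ) else 1) = (n:ℝ) - 2 * A.card := by
  rw [Finset.sum_ite, Finset.sum_const, Finset.sum_const]
  have h1 : Finset.univ.filter (fun i => i ∈ A) = A := by ext i; simp
  have h2 : Finset.univ.filter (fun i => ¬ i ∈ A) = Aᶜ := by ext i; simp
  rw [h1, h2, Finset.card_compl]
  have hle : A.card ≤ n := by
    simpa using Finset.card_le_card (Finset.subset_univ A)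
  rw [Fintype.card_fin]
  simp only [nsmul_eq_mul, mul_neg, mul_one]
  rw [Nat.cast_sub hle]
  ring

theorem khinchine (b : Fin n → ℝ) :
    (2:ℝ)^n * ((Real.sqrt 2)⁻¹ * Real.sqrt (∑ i, b i ^ 2)) ≤ ∑ ε : Fin n → Bool, |S b ε| := by
  set f : (Fin n → Bool) → ℝ := fun ε => |S b ε| with hf
  set c : Finset (Fin n) → ℝ := fun A => ∑ ε, f ε * w A ε with hc
  have hfng : ∀ ε, f (ng ε) = f ε := by
    intro ε
    have : S b (ng ε) = - S b ε := by
      rw [S, S, ← Finset.sum_neg_distrib]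
      exact Finset.sum_congr rfl (fun j _ => by rw [ng, sgn_not]; ring)
    rw [hf]; simp only [this, abs_neg]
  have hf0 : ∀ ε, 0 ≤ f ε := fun ε => abs_nonneg _
  have hT0 : (0:ℝ) ≤ ∑ ε, f ε := Finset.sum_nonneg (fun ε _ => hf0 ε)
  -- step 1 : ∑_A (1 - |A|) c_A^2 ≥ 0
  have step1 : 0 ≤ ∑ A : Finset (Fin n), (1 - (A.card:ℝ)) * c A ^ 2 := by
    have hL : ((n:ℝ) - 2) * ∑ ε, f ε ^2 ≤ ∑ i, ∑ ε, f ε * f (fl i ε) := by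
      rw [Finset.sum_comm, Finset.mul_sum]
      refine Finset.sum_le_sum ?_
      intro ε _
      have goalpt : ((n:ℝ) - 2) * f ε ^2 ≤ ∑ i, f ε * f (fl i ε) := by
        have hp := pointwise b ε
        have : f ε * (((n:ℝ) - 2) * |S b ε|) ≤ f ε * ∑ i, |S b (fl i ε)| :=
          mul_le_mul_of_nonneg_left hp (hf0 ε)
        rw [Finset.mul_sum] at this
        have he : ∀ i, f ε * |S b (fl i ε)| = f ε * f (fl i ε) := fun i => rfl
        simp_rw [he] at this
        have he2 : f ε * (((n:ℝ) - 2) * |S b ε|) = ((n:ℝ)-2) * f ε ^2 := by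
          rw [hf]; ring
        rw [he2] at this
        exact this
      exact goalpt
    have hcorr : ∑ i : Fin n, (2:ℝ)^n * ∑ ε, f ε * f (fl i ε)
        = ∑ A : Finset (Fin n), ((n:ℝ) - 2 * A.card) * c A ^2 := by
      simp only [hc]
      simp_rw [corr f]
      rw [Finset.sum_comm]
      refine Finset.sum_congr rfl (fun A _ => ?_)
      rw [← Finset.sum_mul, sum_ite_mem_card]
    have hpars2 : ∑ A : Finset (Fin n), c A ^2 = 2^n * ∑ ε, f ε ^2 := by
      simp only [hc]; exact parseval f
    have h2n : (0:ℝ) < 2^n := by positivity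
    have hL2 : ((n:ℝ) - 2) * ∑ A : Finset (Fin n), c A ^2
        ≤ ∑ A : Finset (Fin n), ((n:ℝ) - 2 * A.card) * c A ^2 := by
      calc ((n:ℝ) - 2) * ∑ A : Finset (Fin n), c A ^2
          = (2:ℝ)^n * (((n:ℝ) - 2) * ∑ ε, f ε ^2) := by rw [hpars2]; ring
        _ ≤ (2:ℝ)^n * ∑ i, ∑ ε, f ε * f (fl i ε) :=
            mul_le_mul_of_nonneg_left hL (le_of_lt h2n)
        _ = ∑ i : Fin n, (2:ℝ)^n * ∑ ε, f ε * f (fl i ε) := Finset.mul_sum _ _ _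
        _ = _ := hcorr
    have hsplit : ∑ A : Finset (Fin n), ((n:ℝ) - 2 * A.card) * c A ^2
        - ((n:ℝ) - 2) * ∑ A : Finset (Fin n), c A ^2
        = 2 * ∑ A : Finset (Fin n), (1 - (A.card:ℝ)) * c A ^ 2 := by
      rw [Finset.mul_sum, Finset.mul_sum, ← Finset.sum_sub_distrib]
      exact Finset.sum_congr rfl (fun A _ => by ring)
    linarith
  -- step 2 : ∑_{A ≠ ∅} c_A^2 ≤ c_∅^2
  have hempty : c ∅ = ∑ ε, f ε := by
    rw [hc]; simp [w]
  have step2 : ∑ A ∈ (Finset.univ : Finset (Finset (Fin n))).erase ∅, c A ^2 ≤ c ∅ ^2 := by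
    have hsp : ∑ A ∈ (Finset.univ : Finset (Finset (Fin n))).erase ∅,
          (1 - (A.card:ℝ)) * c A ^ 2 + (1 - ((∅:Finset (Fin n)).card:ℝ)) * c ∅ ^2
        = ∑ A : Finset (Fin n), (1 - (A.card:ℝ)) * c A ^ 2 :=
      Finset.sum_erase_add _ _ (mem_univ _)
    have hterm : ∀ A ∈ (Finset.univ : Finset (Finset (Fin n))).erase ∅,
        (1 - (A.card:ℝ)) * c A ^ 2 ≤ - (c A ^2) := by
      intro A hA
      have hAne : A ≠ ∅ := Finset.ne_of_mem_erase hA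
      have hcard : 1 ≤ A.card := Finset.card_pos.2 (Finset.nonempty_of_ne_empty hAne)
      rcases eq_or_lt_of_le hcard with h1 | h1
      · have : c A = 0 := odd_vanish f hfng A h1.symm
        rw [this]; norm_num
      · have h2 : (2:ℝ) ≤ A.card := by exact_mod_cast h1
        nlinarith [sq_nonneg (c A)]
    have := Finset.sum_le_sum hterm
    rw [Finset.sum_neg_distrib] at this
    simp only [Finset.card_empty, Nat.cast_zero] at hsp
    linarith
  -- conclude
  have hpars2 : ∑ A : Finset (Fin n), c A ^2 = 2^n * ∑ ε, f ε ^2 := by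
    simp only [hc]; exact parseval f
  have hsq : ∑ ε, f ε ^2 = 2^n * ∑ i, b i ^2 := by
    have : ∀ ε, f ε ^2 = S b ε ^2 := fun ε => sq_abs _
    simp_rw [this]
    exact sum_S_sq b
  have hparssplit : ∑ A ∈ (Finset.univ : Finset (Finset (Fin n))).erase ∅, c A ^2 + c ∅ ^2
      = ∑ A : Finset (Fin n), c A ^2 := Finset.sum_erase_add _ _ (mem_univ _)
  have key : (2:ℝ)^n * ((2:ℝ)^n * ∑ i, b i ^2) ≤ 2 * (∑ ε, f ε)^2 := by
    have h1 : (2:ℝ)^n * ((2:ℝ)^n * ∑ i, b i ^2) = ∑ A : Finset (Fin n), c A ^2 := by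
      rw [hpars2, hsq]
    rw [h1, ← hempty]
    linarith [step2, hparssplit]
  -- now take square roots
  have hs0 : (0:ℝ) ≤ ∑ i, b i ^2 := Finset.sum_nonneg (fun i _ => sq_nonneg _)
  have hr : (0:ℝ) < Real.sqrt 2 := Real.sqrt_pos.2 two_pos
  have hsql : ((2:ℝ)^n * ((Real.sqrt 2)⁻¹ * Real.sqrt (∑ i, b i ^ 2)))^2
      = (2:ℝ)^n * ((2:ℝ)^n * ∑ i, b i ^2) / 2 := by
    rw [mul_pow, mul_pow, inv_pow, Real.sq_sqrt hs0, Real.sq_sqrt (by norm_num : (0:ℝ) ≤ 2)]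
    ring
  have hfin : ((2:ℝ)^n * ((Real.sqrt 2)⁻¹ * Real.sqrt (∑ i, b i ^ 2)))^2 ≤ (∑ ε, f ε)^2 := by
    rw [hsql]; linarith
  have := Real.sqrt_le_sqrt hfin
  rwa [Real.sqrt_sq (by positivity), Real.sqrt_sq hT0] at this


lemma minkowski {ι κ : Type*} [Fintype ι] [Fintype κ] (g : ι → κ → ℝ) :
    Real.sqrt (∑ j : κ, (∑ t : ι, g t j)^2) ≤ ∑ t : ι, Real.sqrt (∑ j : κ, (g t j)^2) := by
  let v : ι → EuclideanSpace ℝ κ := fun t => WithLp.toLp 2 (fun j => g t j)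
  have h1 : ‖∑ t, v t‖ ≤ ∑ t, ‖v t‖ := norm_sum_le _ _
  have h2 : ∀ t, ‖v t‖ = Real.sqrt (∑ j, (g t j)^2) := by
    intro t; rw [EuclideanSpace.norm_eq]
    congr 1
    exact Finset.sum_congr rfl fun j _ => by rw [Real.norm_eq_abs, sq_abs]
  have h3 : ‖∑ t, v t‖ = Real.sqrt (∑ j, (∑ t, g t j)^2) := by
    rw [EuclideanSpace.norm_eq]
    congr 1
    refine Finset.sum_congr rfl fun j _ => ?_
    rw [Real.norm_eq_abs, sq_abs]
    congr 1
    simp [v]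
  rw [h3] at h1
  calc Real.sqrt (∑ j, (∑ t, g t j)^2) ≤ ∑ t, ‖v t‖ := h1
    _ = ∑ t, Real.sqrt (∑ j, (g t j)^2) := Finset.sum_congr rfl fun t _ => h2 t

lemma sum_cons_eq {β : Type*} [Fintype β] (m : ℕ) (G : (Fin (m+1) → β) → ℝ) :
    ∑ x : Fin (m+1) → β, G x = ∑ y : β, ∑ z : Fin m → β, G (Fin.cons y z) := by
  rw [← Fintype.sum_equiv (Fin.consEquiv (fun _ => β)) (fun p => G (Fin.cons p.1 p.2)) G
    (fun p => rfl)]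
  rw [Fintype.sum_prod_type]

lemma sqrt_sum_sq_mono {κ : Type*} [Fintype κ] (x y : κ → ℝ) (hy : ∀ j, 0 ≤ y j)
    (h : ∀ j, y j ≤ x j) :
    Real.sqrt (∑ j, y j ^2) ≤ Real.sqrt (∑ j, x j ^2) :=
  Real.sqrt_le_sqrt (Finset.sum_le_sum fun j _ => pow_le_pow_left₀ (hy j) (h j) 2)

lemma main (N : ℕ) : ∀ (m : ℕ) (a : (Fin m → Fin N) → ℝ),
    (2:ℝ)^(m*N) * ((Real.sqrt 2)⁻¹^m * Real.sqrt (∑ i, a i ^ 2)) ≤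
      ∑ ε : Fin m → Fin N → Bool, |∑ i, (∏ k, sgn (ε k (i k))) * a i| := by
  intro m
  induction m with
  | zero =>
    intro a
    simp only [Nat.zero_mul, pow_zero, one_mul]
    rw [Fintype.sum_unique (fun i : Fin 0 → Fin N => a i ^2),
      Fintype.sum_unique (fun ε : Fin 0 → Fin N → Bool =>
        |∑ i : Fin 0 → Fin N, (∏ k : Fin 0, sgn (ε k (i k))) * a i|)]
    simp only [Finset.univ_eq_empty, Finset.prod_empty, one_mul]
    rw [Fintype.sum_unique a]
    simp [Real.sqrt_sq_eq_abs]
  | succ m ih =>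
    intro a
    set c : (Fin m → Fin N → Bool) → Fin N → ℝ := fun ε' i₀ =>
      ∑ i' : Fin m → Fin N, (∏ k, sgn (ε' k (i' k))) * a (Fin.cons i₀ i') with hcdef
    have hrhs : ∑ ε : Fin (m+1) → Fin N → Bool, |∑ i, (∏ k, sgn (ε k (i k))) * a i|
        = ∑ ε' : Fin m → Fin N → Bool, ∑ ε₀ : Fin N → Bool, |S (c ε') ε₀| := by
      rw [sum_cons_eq]
      rw [Finset.sum_comm]
      refine Finset.sum_congr rfl fun ε' _ => Finset.sum_congr rfl fun ε₀ _ => ?_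
      congr 1
      rw [sum_cons_eq m (fun i => (∏ k, sgn ((Fin.cons ε₀ ε' : Fin (m+1) → Fin N → Bool) k (i k))) * a i)]
      rw [S, hcdef]
      refine Finset.sum_congr rfl fun i₀ _ => ?_
      rw [Finset.mul_sum]
      refine Finset.sum_congr rfl fun i' _ => ?_
      rw [Fin.prod_univ_succ]
      simp only [Fin.cons_zero, Fin.cons_succ]
      ring
    have hlhs : ∑ i : Fin (m+1) → Fin N, a i ^2
        = ∑ i₀ : Fin N, ∑ i' : Fin m → Fin N, a (Fin.cons i₀ i') ^2 :=
      sum_cons_eq m (fun i => a i ^2)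
    rw [hrhs, hlhs]
    -- apply scalar khinchine for each ε'
    have step1 : ∑ ε' : Fin m → Fin N → Bool, (2:ℝ)^N *
          ((Real.sqrt 2)⁻¹ * Real.sqrt (∑ i₀, c ε' i₀ ^2))
        ≤ ∑ ε' : Fin m → Fin N → Bool, ∑ ε₀ : Fin N → Bool, |S (c ε') ε₀| :=
      Finset.sum_le_sum fun ε' _ => khinchine (c ε')
    -- Minkowski
    have step2 : Real.sqrt (∑ i₀ : Fin N, (∑ ε' : Fin m → Fin N → Bool, |c ε' i₀|)^2)
        ≤ ∑ ε' : Fin m → Fin N → Bool, Real.sqrt (∑ i₀ : Fin N, c ε' i₀ ^2) := by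
      have := minkowski (fun ε' i₀ => |c ε' i₀|)
      simp only [sq_abs] at this
      exact this
    -- induction hypothesis per i₀
    have step3 : ∀ i₀ : Fin N,
        (2:ℝ)^(m*N) * ((Real.sqrt 2)⁻¹^m * Real.sqrt (∑ i' : Fin m → Fin N, a (Fin.cons i₀ i') ^2))
          ≤ ∑ ε' : Fin m → Fin N → Bool, |c ε' i₀| := fun i₀ => ih (fun i' => a (Fin.cons i₀ i'))
    -- combine
    have hK0 : (0:ℝ) ≤ (2:ℝ)^(m*N) * (Real.sqrt 2)⁻¹^m := by positivity
    have step4 : (2:ℝ)^(m*N) * (Real.sqrt 2)⁻¹^m *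
          Real.sqrt (∑ i₀, ∑ i' : Fin m → Fin N, a (Fin.cons i₀ i') ^2)
        ≤ Real.sqrt (∑ i₀ : Fin N, (∑ ε' : Fin m → Fin N → Bool, |c ε' i₀|)^2) := by
      have heq : (2:ℝ)^(m*N) * (Real.sqrt 2)⁻¹^m *
            Real.sqrt (∑ i₀, ∑ i' : Fin m → Fin N, a (Fin.cons i₀ i') ^2)
          = Real.sqrt (∑ i₀ : Fin N, ((2:ℝ)^(m*N) * ((Real.sqrt 2)⁻¹^m *
              Real.sqrt (∑ i' : Fin m → Fin N, a (Fin.cons i₀ i') ^2)))^2) := by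
        have : ∀ i₀ : Fin N, ((2:ℝ)^(m*N) * ((Real.sqrt 2)⁻¹^m *
              Real.sqrt (∑ i' : Fin m → Fin N, a (Fin.cons i₀ i') ^2)))^2
            = ((2:ℝ)^(m*N) * (Real.sqrt 2)⁻¹^m)^2 * ∑ i' : Fin m → Fin N, a (Fin.cons i₀ i') ^2 := by
          intro i₀
          rw [mul_pow, mul_pow, Real.sq_sqrt (Finset.sum_nonneg fun _ _ => sq_nonneg _)]
          ring
        simp_rw [this]
        rw [← Finset.mul_sum, Real.sqrt_mul (sq_nonneg _), Real.sqrt_sq hK0]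
      rw [heq]
      refine sqrt_sum_sq_mono _ _ (fun i₀ => by positivity) (fun i₀ => step3 i₀)
    have step5 : (2:ℝ)^N * ((Real.sqrt 2)⁻¹ *
          ((2:ℝ)^(m*N) * (Real.sqrt 2)⁻¹^m *
            Real.sqrt (∑ i₀, ∑ i' : Fin m → Fin N, a (Fin.cons i₀ i') ^2)))
        ≤ ∑ ε' : Fin m → Fin N → Bool, ∑ ε₀ : Fin N → Bool, |S (c ε') ε₀| := by
      calc (2:ℝ)^N * ((Real.sqrt 2)⁻¹ *
            ((2:ℝ)^(m*N) * (Real.sqrt 2)⁻¹^m *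
              Real.sqrt (∑ i₀, ∑ i' : Fin m → Fin N, a (Fin.cons i₀ i') ^2)))
          ≤ (2:ℝ)^N * ((Real.sqrt 2)⁻¹ *
              Real.sqrt (∑ i₀ : Fin N, (∑ ε' : Fin m → Fin N → Bool, |c ε' i₀|)^2)) := by
            refine mul_le_mul_of_nonneg_left (mul_le_mul_of_nonneg_left step4 ?_) ?_
            · positivity
            · positivity
        _ ≤ (2:ℝ)^N * ((Real.sqrt 2)⁻¹ *
              ∑ ε' : Fin m → Fin N → Bool, Real.sqrt (∑ i₀ : Fin N, c ε' i₀ ^2)) := by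
            refine mul_le_mul_of_nonneg_left (mul_le_mul_of_nonneg_left step2 ?_) ?_
            · positivity
            · positivity
        _ = ∑ ε' : Fin m → Fin N → Bool, (2:ℝ)^N *
              ((Real.sqrt 2)⁻¹ * Real.sqrt (∑ i₀, c ε' i₀ ^2)) := by
            rw [Finset.mul_sum]
            simp_rw [Finset.mul_sum]
        _ ≤ _ := step1
    refine le_trans (le_of_eq ?_) step5
    rw [pow_succ ((Real.sqrt 2)⁻¹) m]
    have : (m+1) * N = N + m * N := by ring
    rw [this, pow_add]
    ring

end MK

/-- **Multiple Khinchine inequality for `p = 1` with the optimal constant `A₁ = 1/√2`.**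
For positive integers `m, N` and a real array `(a_{i₁,...,i_m})`, the `ℓ₂`-norm of the
array is bounded by `(√2)^m` times the average, over all choices of `m` sign vectors
`ε¹,...,ε^m ∈ {-1,1}^N`, of `|∑_{i₁,...,i_m} ε¹_{i₁}···ε^m_{i_m} a_{i₁,...,i_m}|`. -/
theorem multiple_khinchine (m N : ℕ) (hm : 0 < m) (hN : 0 < N)
    (a : (Fin m → Fin N) → ℝ) :
    (1 / Real.sqrt 2) ^ m * Real.sqrt (∑ i : Fin m → Fin N, |a i| ^ 2)
      ≤ ((2 : ℝ) ^ (m * N))⁻¹ *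
        ∑ ε : Fin m → Fin N → Bool,
          |∑ i : Fin m → Fin N,
            (∏ k : Fin m, if ε k (i k) then (1 : ℝ) else -1) * a i| := by
  have h := MK.main N m a
  simp only [MK.sgn] at h
  have hpos : (0:ℝ) < (2:ℝ)^(m*N) := by positivity
  rw [one_div]
  simp only [sq_abs]
  rw [inv_mul_eq_div, le_div_iff₀ hpos]
  calc (Real.sqrt 2)⁻¹ ^ m * Real.sqrt (∑ i : Fin m → Fin N, a i ^ 2) * 2 ^ (m * N)
      = (2:ℝ)^(m*N) * ((Real.sqrt 2)⁻¹^m * Real.sqrt (∑ i : Fin m → Fin N, a i ^ 2)) := by ring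
    _ ≤ _ := h
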